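/- Let U be a separable real Banach space and let ν be a Borel measure on U such that ∫_U ⟨u,a⟩² ν(du) < ∞ for every a ∈ U*. Then the linear map G : U* → L²(U, B(U), ν), Ga = ⟨·, a⟩, is bounded; that is, there exists a constant C ≥ 0 such that ∫_U ⟨u,a⟩² ν(du) ≤ C² ‖a‖² for all a ∈ U*. -/

import Mathlib

open MeasureTheory Filter Topology

/-- If ν is a Borel measure on a separable Banach space U such that
∫ ⟨u,a⟩² ν(du) < ∞ for every a ∈ U*, then the map a ↦ ⟨·,a⟩ into L²(ν) is bounded:
there is C ≥ 0 with ∫ ⟨u,a⟩² ν(du) ≤ C² ‖a‖² for all a ∈ U*. -/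
theorem squared_pairing_integral_bounded
    {U : Type*} [NormedAddCommGroup U] [NormedSpace ℝ U] [CompleteSpace U]
    [TopologicalSpace.SeparableSpace U] [MeasurableSpace U] [BorelSpace U]
    (ν : Measure U)
    (hint : ∀ a : U →L[ℝ] ℝ, Integrable (fun u => (a u) ^ 2) ν) :
    ∃ C : ℝ, 0 ≤ C ∧ ∀ a : U →L[ℝ] ℝ, ∫ u, (a u) ^ 2 ∂ν ≤ C ^ 2 * ‖a‖ ^ 2 := by
  have hm : ∀ a : U →L[ℝ] ℝ, MemLp (fun u => a u) 2 ν := fun a =>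
    (memLp_two_iff_integrable_sq a.continuous.aestronglyMeasurable).2 (hint a)
  let G : (U →L[ℝ] ℝ) →ₗ[ℝ] Lp ℝ 2 ν :=
    { toFun := fun a => (hm a).toLp _
      map_add' := fun a b => by
        rw [← MemLp.toLp_add (hm a) (hm b)]; rfl
      map_smul' := fun c a => by
        rw [RingHom.id_apply, ← MemLp.toLp_const_smul c (hm a)]
        rfl }
  have hGfn : ∀ a : U →L[ℝ] ℝ, (G a : U → ℝ) =ᵐ[ν] fun u => a u := fun a =>
    MemLp.coeFn_toLp (hm a)
  have hG : Continuous G := by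
    apply G.continuous_of_seq_closed_graph
    intro u x y hux huy
    have hmeas : TendstoInMeasure ν (fun n => ((G (u n) : Lp ℝ 2 ν) : U → ℝ)) atTop
        ((y : Lp ℝ 2 ν) : U → ℝ) :=
      tendstoInMeasure_of_tendsto_Lp huy
    obtain ⟨ns, _, hae⟩ := hmeas.exists_seq_tendsto_ae
    have hyx : (y : U → ℝ) =ᵐ[ν] fun v => x v := by
      have hall : ∀ᵐ v ∂ν, ∀ n : ℕ, (G (u n) : U → ℝ) v = u n v :=
        MeasureTheory.ae_all_iff.2 fun n => hGfn (u n)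
      filter_upwards [hae, hall] with v hv hvall
      have h1 : Tendsto (fun i => u (ns i) v) atTop (𝓝 ((y : U → ℝ) v)) := by
        have := hv
        simpa [hvall] using this
      have h2 : Tendsto (fun i => u (ns i) v) atTop (𝓝 (x v)) := by
        have hx : Tendsto (fun n => u n v) atTop (𝓝 (x v)) :=
          ((ContinuousLinearMap.apply ℝ ℝ v).continuous.tendsto x).comp hux
        exact hx.comp (StrictMono.tendsto_atTop ‹_›)
      exact tendsto_nhds_unique h1 h2
    exact Lp.ext (hyx.trans (hGfn x).symm)
  let G' : (U →L[ℝ] ℝ) →L[ℝ] Lp ℝ 2 ν := { toLinearMap := G, cont := hG }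
  refine ⟨‖G'‖, G'.opNorm_nonneg, fun a => ?_⟩
  have hnorm : ∫ u, (a u) ^ 2 ∂ν = ‖G' a‖ ^ 2 := by
    have h1 : (inner ℝ (G' a) (G' a) : ℝ) = ∫ v, (G' a : U → ℝ) v * (G' a : U → ℝ) v ∂ν := by
      rw [L2.inner_def]
      rfl
    have h2 : ∫ v, (G' a : U → ℝ) v * (G' a : U → ℝ) v ∂ν = ∫ u, (a u) ^ 2 ∂ν := by
      refine integral_congr_ae ?_
      filter_upwards [hGfn a] with v hv
      show ((G a : U → ℝ) v) * ((G a : U → ℝ) v) = a v ^ 2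
      rw [hv, sq]
    rw [← real_inner_self_eq_norm_sq, h1, h2]
  rw [hnorm, mul_comm, ← mul_pow]
  have := G'.le_opNorm a
  exact pow_le_pow_left₀ (norm_nonneg _) (by simpa [mul_comm] using this) 2
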